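/- arXiv:2106.07493 — 2 statements merged into one kernel-verified Lean document; each statement's English description precedes it below -/
import Mathlib

section
/- Let h > 0, ε > 0, K ≥ 0, and let f : ℝ → ℝ be nondecreasing. Assume that limsup_{t→∞} e^{−ht} (f(t+ε) − f(t−ε)) ≤ 2εK. Then limsup_{t→∞} h e^{−ht} f(t) ≤ e^{4hε} K. -/
open Filter Real

lemma window_key (h ε c T : ℝ) (hh : 0 < h) (hε : 0 < ε)
    (f : ℝ → ℝ) (hf : Monotone f)
    (hw : ∀ t, T ≤ t → f (t + ε) - f (t - ε) ≤ c * Real.exp (h * t)) :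
    ∀ n : ℕ, ∀ t : ℝ, T ≤ t - 2 * n * ε →
      f t ≤ f (t - 2 * n * ε) +
        c * Real.exp (h * (t - ε)) * ∑ j ∈ Finset.range n, Real.exp (-(2 * h * ε)) ^ j := by
  intro n
  induction n with
  | zero => intro t ht; simp
  | succ n ih =>
    intro t ht
    have hcast : ((n : ℝ) + 1) = ((n + 1 : ℕ) : ℝ) := by push_cast; ring
    have ht' : T ≤ (t - 2 * ε) - 2 * n * ε := by
      have : T ≤ t - 2 * ((n : ℝ) + 1) * ε := by rw [hcast]; exact ht
      nlinarith
    have ih' := ih (t - 2 * ε) ht'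
    have hwin : f t - f (t - 2 * ε) ≤ c * Real.exp (h * (t - ε)) := by
      have hT : T ≤ t - ε := by nlinarith
      have := hw (t - ε) hT
      have e1 : t - ε + ε = t := by ring
      have e2 : t - ε - ε = t - 2 * ε := by ring
      rw [e1, e2] at this
      exact this
    have hsum : (∑ j ∈ Finset.range (n + 1), Real.exp (-(2 * h * ε)) ^ j)
        = Real.exp (-(2 * h * ε)) * ∑ j ∈ Finset.range n, Real.exp (-(2 * h * ε)) ^ j + 1 :=
      geom_sum_succ
    have hexp : Real.exp (h * (t - 2 * ε - ε)) = Real.exp (h * (t - ε)) * Real.exp (-(2 * h * ε)) := by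
      rw [← Real.exp_add]; ring_nf
    have harg : t - 2 * ε - 2 * n * ε = t - 2 * ((n + 1 : ℕ) : ℝ) * ε := by push_cast; ring
    rw [harg] at ih'
    calc f t ≤ f (t - 2 * ε) + c * Real.exp (h * (t - ε)) := by linarith
    _ ≤ f (t - 2 * ((n + 1 : ℕ) : ℝ) * ε) +
          c * Real.exp (h * (t - 2 * ε - ε)) * ∑ j ∈ Finset.range n, Real.exp (-(2 * h * ε)) ^ j
          + c * Real.exp (h * (t - ε)) := by linarith
    _ = f (t - 2 * ((n + 1 : ℕ) : ℝ) * ε) +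
          c * Real.exp (h * (t - ε)) * ∑ j ∈ Finset.range (n + 1), Real.exp (-(2 * h * ε)) ^ j := by
        rw [hsum, hexp]; ring

set_option maxHeartbeats 2000000 in
/-- If `f : ℝ → ℝ` is nondecreasing and
`limsup_{t→∞} e^{-h t} (f (t+ε) - f (t-ε)) ≤ 2 ε K`, then
`limsup_{t→∞} h e^{-h t} f t ≤ e^{4 h ε} K`. -/
theorem limsup_of_window_upper_bound
    (h ε K : ℝ) (hh : 0 < h) (hε : 0 < ε) (hK : 0 ≤ K)
    (f : ℝ → ℝ) (hf : Monotone f)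
    (hyp : Filter.limsup (fun t : ℝ => Real.exp (-h * t) * (f (t + ε) - f (t - ε))) atTop
        ≤ 2 * ε * K) :
    Filter.limsup (fun t : ℝ => h * Real.exp (-h * t) * f t) atTop
        ≤ Real.exp (4 * h * ε) * K := by
  set W : ℝ → ℝ := fun t => Real.exp (-h * t) * (f (t + ε) - f (t - ε)) with hW
  set g : ℝ → ℝ := fun t => h * Real.exp (-h * t) * f t with hg
  set r : ℝ := Real.exp (-(2 * h * ε)) with hr
  have hr0 : 0 < r := Real.exp_pos _
  have hr1 : r < 1 := by
    rw [hr, Real.exp_lt_one_iff]; nlinarith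
  have hrlt : 0 < 1 - r := by linarith
  have hK' : 0 ≤ Real.exp (4 * h * ε) * K :=
    mul_nonneg (Real.exp_pos _).le hK
  -- relation between g bounded and W bounded
  have gbdd_imp_Wbdd : IsBoundedUnder (· ≤ ·) atTop g → IsBoundedUnder (· ≤ ·) atTop W := by
    rintro ⟨a, ha⟩
    rw [eventually_map, eventually_atTop] at ha
    obtain ⟨T, hT⟩ := ha
    set T' := max T 0 with hT'
    refine ⟨a / h * Real.exp (h * ε) + max 0 (-(f T')), ?_⟩
    rw [eventually_map, eventually_atTop]
    refine ⟨T' + ε, fun t htt => ?_⟩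
    have ht0 : 0 ≤ t := by
      have := le_max_right T 0; nlinarith
    have h1 : h * Real.exp (-h * (t + ε)) * f (t + ε) ≤ a := by
      apply hT; have := le_max_left T 0; linarith
    have hexp1 : Real.exp (-h * t) = Real.exp (-h * (t + ε)) * Real.exp (h * ε) := by
      rw [← Real.exp_add]; congr 1; ring
    have h2 : Real.exp (-h * t) * f (t + ε) ≤ a / h * Real.exp (h * ε) := by
      rw [hexp1]
      have : Real.exp (-h * (t + ε)) * f (t + ε) ≤ a / h := by
        rw [le_div_iff₀ hh]; nlinarith [Real.exp_pos (-h * (t + ε))]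
      nlinarith [Real.exp_pos (h * ε)]
    have h3 : f T' ≤ f (t - ε) := hf (by linarith)
    have h4 : -(Real.exp (-h * t) * f (t - ε)) ≤ max 0 (-(f T')) := by
      have he1 : Real.exp (-h * t) ≤ 1 := by
        rw [Real.exp_le_one_iff]; nlinarith
      have he0 : 0 < Real.exp (-h * t) := Real.exp_pos _
      rcases le_or_gt 0 (f (t - ε)) with hc | hc
      · have : 0 ≤ Real.exp (-h * t) * f (t - ε) := by positivity
        calc -(Real.exp (-h * t) * f (t - ε)) ≤ 0 := by linarith
        _ ≤ max 0 (-(f T')) := le_max_left _ _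
      · have hfT : f T' < 0 := lt_of_le_of_lt h3 hc
        calc -(Real.exp (-h * t) * f (t - ε)) = Real.exp (-h * t) * (-(f (t - ε))) := by ring
        _ ≤ 1 * (-(f (t - ε))) := by nlinarith
        _ = -(f (t - ε)) := by ring
        _ ≤ -(f T') := by linarith
        _ ≤ max 0 (-(f T')) := le_max_right _ _
    show W t ≤ _
    have : W t = Real.exp (-h * t) * f (t + ε) + (-(Real.exp (-h * t) * f (t - ε))) := by
      rw [hW]; ring
    rw [this]; exact add_le_add h2 h4
  by_cases hb : IsBoundedUnder (· ≤ ·) atTop W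
  · -- main case
    -- Step: for all c > 2 ε K, limsup g ≤ c * B where B = h * exp(-(h*ε))/(1-r)
    set B : ℝ := h * Real.exp (-(h * ε)) / (1 - r) with hB
    have hBpos : 0 < B := by
      apply div_pos (by positivity) hrlt
    have main : ∀ c : ℝ, 2 * ε * K < c → limsup g atTop ≤ c * B := by
      intro c hc
      have hc0 : 0 < c := lt_of_le_of_lt (by positivity) hc
      -- eventually W t < c
      obtain ⟨a, ha⟩ := hb
      rw [eventually_map] at ha
      have hSne : {a : ℝ | ∀ᶠ t in atTop, W t ≤ a}.Nonempty := ⟨a, ha⟩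
      have hlt : sInf {a : ℝ | ∀ᶠ t in atTop, W t ≤ a} < c := by
        have : limsup W atTop ≤ 2 * ε * K := hyp
        rw [Filter.limsup_eq] at this
        exact lt_of_le_of_lt this hc
      obtain ⟨b, hbS, hbc⟩ := exists_lt_of_csInf_lt hSne hlt
      rw [Set.mem_setOf_eq, eventually_atTop] at hbS
      obtain ⟨T, hT⟩ := hbS
      -- window bound
      have hwin : ∀ t, T ≤ t → f (t + ε) - f (t - ε) ≤ c * Real.exp (h * t) := by
        intro t ht
        have h1 : W t ≤ b := hT t ht
        have h2 : Real.exp (-h * t) * (f (t + ε) - f (t - ε)) < c := lt_of_le_of_lt h1 hbc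
        have he : Real.exp (h * t) * Real.exp (-h * t) = 1 := by
          rw [← Real.exp_add]
          rw [show h * t + -h * t = 0 by ring, Real.exp_zero]
        calc f (t + ε) - f (t - ε)
            = Real.exp (h * t) * (Real.exp (-h * t) * (f (t + ε) - f (t - ε))) := by
              rw [← mul_assoc, he, one_mul]
          _ ≤ Real.exp (h * t) * c :=
              mul_le_mul_of_nonneg_left h2.le (Real.exp_pos _).le
          _ = c * Real.exp (h * t) := mul_comm _ _
      have key := window_key h ε c T hh hε f hf hwin
      -- geometric sum bound
      have hgeom : ∀ n : ℕ, ∑ j ∈ Finset.range n, r ^ j ≤ 1 / (1 - r) := by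
        intro n
        rw [le_div_iff₀ hrlt]
        nlinarith [geom_sum_mul r n, pow_pos hr0 n]
      -- pointwise bound for t ≥ T
      have hpt : ∀ t, T ≤ t → f t ≤ f (T + 2 * ε) + c * Real.exp (h * (t - ε)) * (1 / (1 - r)) := by
        intro t ht
        set n : ℕ := ⌊(t - T) / (2 * ε)⌋₊ with hn
        have h2ε : 0 < 2 * ε := by linarith
        have hfl : (n : ℝ) ≤ (t - T) / (2 * ε) := Nat.floor_le (div_nonneg (by linarith) (by linarith))
        have hfl2 : (t - T) / (2 * ε) < n + 1 := Nat.lt_floor_add_one _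
        have hTn : T ≤ t - 2 * n * ε := by
          have : (n : ℝ) * (2 * ε) ≤ t - T := by
            rw [← le_div_iff₀ h2ε]; exact hfl
          nlinarith
        have hTn2 : t - 2 * n * ε ≤ T + 2 * ε := by
          have : t - T < ((n : ℝ) + 1) * (2 * ε) := by
            rw [← div_lt_iff₀ h2ε]; exact hfl2
          nlinarith
        have hk := key n t hTn
        have hmono : f (t - 2 * n * ε) ≤ f (T + 2 * ε) := hf hTn2
        have hsumle : c * Real.exp (h * (t - ε)) * (∑ j ∈ Finset.range n, r ^ j)
            ≤ c * Real.exp (h * (t - ε)) * (1 / (1 - r)) := by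
          apply mul_le_mul_of_nonneg_left (hgeom n) (by positivity)
        calc f t ≤ f (t - 2 * n * ε) + c * Real.exp (h * (t - ε)) * ∑ j ∈ Finset.range n, r ^ j := hk
        _ ≤ f (T + 2 * ε) + c * Real.exp (h * (t - ε)) * (1 / (1 - r)) := by linarith
      -- g t ≤ h e^{-ht} f(T+2ε) + c * B
      have hgpt : ∀ t, T ≤ t → g t ≤ h * Real.exp (-h * t) * f (T + 2 * ε) + c * B := by
        intro t ht
        have := hpt t ht
        have hexp : Real.exp (-h * t) * Real.exp (h * (t - ε)) = Real.exp (-(h * ε)) := by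
          rw [← Real.exp_add]; congr 1; ring
        have hstep : h * Real.exp (-h * t) * f t
            ≤ h * Real.exp (-h * t) * (f (T + 2 * ε) + c * Real.exp (h * (t - ε)) * (1 / (1 - r))) := by
          apply mul_le_mul_of_nonneg_left this (by positivity)
        calc g t = h * Real.exp (-h * t) * f t := rfl
          _ ≤ h * Real.exp (-h * t) *
              (f (T + 2 * ε) + c * Real.exp (h * (t - ε)) * (1 / (1 - r))) := hstep
          _ = h * Real.exp (-h * t) * f (T + 2 * ε) + c * B := by
              rw [hB, ← hexp]; field_simp
      -- coboundedness of g
      have hcob : IsCoboundedUnder (· ≤ ·) atTop g := by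
        apply isCoboundedUnder_le_of_eventually_le atTop (x := min 0 (h * f 0))
        rw [eventually_atTop]
        refine ⟨0, fun t ht => ?_⟩
        have he1 : Real.exp (-h * t) ≤ 1 := by rw [Real.exp_le_one_iff]; nlinarith
        have he0 : 0 < Real.exp (-h * t) := Real.exp_pos _
        have hm : f 0 ≤ f t := hf ht
        rcases le_or_gt 0 (f t) with hc' | hc'
        · have : (0:ℝ) ≤ h * Real.exp (-h * t) * f t := by positivity
          exact le_trans (min_le_left _ _) this
        · have hf0 : f 0 < 0 := lt_of_le_of_lt hm hc'
          refine le_trans (min_le_right _ _) ?_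
          have : h * f 0 ≤ h * f t := by nlinarith
          calc h * f 0 ≤ h * f t := this
          _ ≤ h * Real.exp (-h * t) * f t := by
              have h5 : f t ≤ Real.exp (-h * t) * f t := by
                nlinarith [mul_nonneg (sub_nonneg.mpr he1) (neg_nonneg.mpr hc'.le)]
              rw [mul_assoc]
              exact mul_le_mul_of_nonneg_left h5 hh.le
      -- limsup bound via δ
      refine le_of_forall_pos_le_add (fun δ hδ => ?_)
      have htend : Tendsto (fun t : ℝ => h * Real.exp (-h * t) * f (T + 2 * ε)) atTop (nhds 0) := by
        have h1 : Tendsto (fun t : ℝ => Real.exp (-h * t)) atTop (nhds 0) :=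
          Real.tendsto_exp_atBot.comp
            (tendsto_id.const_mul_atTop_of_neg (by linarith : -h < 0))
        have h2 := h1.const_mul h
        have h3 := h2.mul_const (f (T + 2 * ε))
        simpa using h3
      have hev : ∀ᶠ t in atTop, h * Real.exp (-h * t) * f (T + 2 * ε) ≤ δ := by
        have := htend.eventually_le_const (by linarith : (0:ℝ) < δ)
        exact this
      have hev2 : ∀ᶠ t in atTop, g t ≤ c * B + δ := by
        filter_upwards [hev, eventually_ge_atTop T] with t h1 h2
        have := hgpt t h2
        linarith
      exact limsup_le_of_le hcob hev2
    -- conclude limsup g ≤ 2 ε K * B ≤ K ≤ RHS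
    have hfin : limsup g atTop ≤ 2 * ε * K * B := by
      refine le_of_forall_pos_le_add (fun δ hδ => ?_)
      have hd : 0 < δ / B := div_pos hδ hBpos
      have hm := main (2 * ε * K + δ / B) (by linarith)
      have heq : (2 * ε * K + δ / B) * B = 2 * ε * K * B + δ := by
        field_simp
      rw [heq] at hm
      linarith
    have hB1 : 2 * ε * B ≤ 1 := by
      have hx : 0 < h * ε := by positivity
      have hsinh := (Real.self_lt_sinh_iff).mpr hx
      rw [Real.sinh_eq] at hsinh
      have hmul : 2 * (h * ε) * Real.exp (-(h * ε)) < 1 - r := by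
        have he : Real.exp (-(h * ε)) * Real.exp (h * ε) = 1 := by
          rw [← Real.exp_add, show -(h * ε) + h * ε = 0 by ring, Real.exp_zero]
        have he2 : Real.exp (-(h * ε)) * Real.exp (-(h * ε)) = r := by
          rw [hr, ← Real.exp_add]; congr 1; ring
        have h2x : 2 * (h * ε) < Real.exp (h * ε) - Real.exp (-(h * ε)) := by linarith
        have := mul_lt_mul_of_pos_right h2x (Real.exp_pos (-(h * ε)))
        nlinarith [this, he, he2]
      calc 2 * ε * B = 2 * (h * ε) * Real.exp (-(h * ε)) / (1 - r) := by rw [hB]; ring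
        _ ≤ 1 := by rw [div_le_one hrlt]; linarith
    have hKB : 2 * ε * K * B ≤ K := by
      nlinarith [mul_le_mul_of_nonneg_left hB1 hK]
    have hKR : K ≤ Real.exp (4 * h * ε) * K := by
      nlinarith [Real.one_le_exp (by positivity : (0:ℝ) ≤ 4 * h * ε)]
    exact le_trans hfin (le_trans hKB hKR)
  · -- unbounded case: limsup g = sInf ∅ = 0
    have hgb : ¬ IsBoundedUnder (· ≤ ·) atTop g := fun hgb => hb (gbdd_imp_Wbdd hgb)
    have hempty : {a : ℝ | ∀ᶠ t in atTop, g t ≤ a} = ∅ := by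
      rw [Set.eq_empty_iff_forall_notMem]
      intro a ha
      exact hgb ⟨a, by rwa [eventually_map]⟩
    have : limsup g atTop = 0 := by
      rw [Filter.limsup_eq, hempty, Real.sInf_empty]
    rw [this]; exact hK'
end

section
/- Let h > 0 and c ∈ ℝ, and let f : [0,∞) → ℝ be nondecreasing. If lim_{t→∞} h e^{−ht} ∫₀ᵗ f(r) dr = c, then lim_{t→∞} f(t) e^{−ht} = c. -/
open Filter Real MeasureTheory intervalIntegral Topology

private lemma exp_ineq1 (x : ℝ) : Real.exp x - 1 ≤ x * Real.exp x := by
  have h1 : (-x) + 1 ≤ Real.exp (-x) := Real.add_one_le_exp _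
  have h2 : Real.exp (-x) * Real.exp x = 1 := by
    rw [← Real.exp_add]; simp
  nlinarith [Real.exp_pos x]

private lemma exp_ineq2 (x : ℝ) : x * Real.exp (-x) ≤ 1 - Real.exp (-x) := by
  have h1 : x + 1 ≤ Real.exp x := Real.add_one_le_exp _
  have h2 : Real.exp (-x) * Real.exp x = 1 := by
    rw [← Real.exp_add]; simp
  nlinarith [Real.exp_pos (-x), Real.exp_pos x]

private lemma exp_ineq3 (x : ℝ) : 1 - Real.exp (-x) ≤ Real.exp x - 1 := by
  have h2 : Real.exp (-x) * Real.exp x = 1 := by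
    rw [← Real.exp_add]; simp
  nlinarith [Real.exp_pos (-x), Real.exp_pos x, sq_nonneg (Real.exp x - 1)]

/-- Tauberian direction: if `f` is nondecreasing on `[0, ∞)` and
`h e^{-h t} ∫₀ᵗ f → c` as `t → ∞`, then `f t · e^{-h t} → c` as `t → ∞`. -/
theorem tauberian_sphere_volume_asymptotics
    (h c : ℝ) (hh : 0 < h) (f : ℝ → ℝ)
    (hf : MonotoneOn f (Set.Ici (0:ℝ)))
    (hlim : Tendsto (fun t : ℝ => h * Real.exp (-h * t) * ∫ r in (0:ℝ)..t, f r)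
      atTop (nhds c)) :
    Tendsto (fun t : ℝ => f t * Real.exp (-h * t)) atTop (nhds c) := by
  set B : ℝ → ℝ := fun t => ∫ r in (0:ℝ)..t, f r with hBdef
  have hint : ∀ a b : ℝ, 0 ≤ a → 0 ≤ b → IntervalIntegrable f volume a b := by
    intro a b ha hb
    exact (hf.mono (fun x hx => (le_inf ha hb).trans hx.1)).intervalIntegrable
  set F : ℝ → ℝ := fun t => Real.exp (-h * t) * B t with hFdef
  have hFlim : Tendsto F atTop (𝓝 (c / h)) := by
    have := hlim.const_mul h⁻¹
    have heq : (fun t : ℝ => h⁻¹ * (h * Real.exp (-h * t) * B t)) = F := by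
      funext t
      field_simp [hFdef]
      simp only [hFdef, neg_mul]
    rw [heq] at this
    simpa [div_eq_inv_mul] using this
  -- c is nonnegative
  have hc : 0 ≤ c := by
    have hlow : Tendsto (fun t : ℝ => (h * f 0 / h) * ((h * t) ^ 1 * Real.exp (-(h * t))))
        atTop (𝓝 ((h * f 0 / h) * 0)) :=
      ((tendsto_pow_mul_exp_neg_atTop_nhds_zero 1).comp
        (tendsto_id.const_mul_atTop hh)).const_mul _
    have hlow' : Tendsto (fun t : ℝ => h * Real.exp (-h * t) * (t * f 0)) atTop (𝓝 0) := by
      have heq : (fun t : ℝ => (h * f 0 / h) * ((h * t) ^ 1 * Real.exp (-(h * t))))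
          = fun t : ℝ => h * Real.exp (-h * t) * (t * f 0) := by
        funext t
        have : -(h * t) = -h * t := by ring
        rw [this]
        field_simp
      rw [heq] at hlow
      simpa using hlow
    refine le_of_tendsto_of_tendsto hlow' hlim ?_
    filter_upwards [eventually_ge_atTop (0:ℝ)] with t ht
    have hbound : t * f 0 ≤ B t := by
      have h1 : ∫ r in (0:ℝ)..t, f 0 ≤ ∫ r in (0:ℝ)..t, f r :=
        intervalIntegral.integral_mono_on ht intervalIntegrable_const (hint 0 t le_rfl ht)
          (fun x hx => hf (by exact le_refl (0:ℝ)) hx.1 hx.1)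
      simpa using h1
    have := mul_le_mul_of_nonneg_left hbound
      (by positivity : 0 ≤ h * Real.exp (-h * t))
    exact this
  rw [Metric.tendsto_nhds]
  intro ε hε
  -- choose δ > 0 small
  have hcont : Tendsto (fun δ : ℝ => c * (Real.exp (h * δ) - 1)) (𝓝[>] 0) (𝓝 0) := by
    have hcont0 : ContinuousAt (fun δ : ℝ => c * (Real.exp (h * δ) - 1)) 0 := by
      fun_prop
    have := hcont0.tendsto.mono_left (nhdsWithin_le_nhds (s := Set.Ioi (0:ℝ)))
    simpa using this
  obtain ⟨δ, hδsmall, hδpos⟩ :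
      ∃ δ : ℝ, c * (Real.exp (h * δ) - 1) < ε / 2 ∧ 0 < δ := by
    have := (hcont.eventually (gt_mem_nhds (by linarith : (0:ℝ) < ε / 2))).and
      self_mem_nhdsWithin
    obtain ⟨δ, h1, h2⟩ := this.exists
    exact ⟨δ, h1, h2⟩
  -- limits of shifted F
  have hFshiftp : Tendsto (fun t : ℝ => F (t + δ)) atTop (𝓝 (c / h)) :=
    hFlim.comp (tendsto_atTop_add_const_right atTop δ tendsto_id)
  have hFshiftm : Tendsto (fun t : ℝ => F (t - δ)) atTop (𝓝 (c / h)) :=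
    hFlim.comp (tendsto_atTop_add_const_right atTop (-δ) tendsto_id)
  have hRlim : Tendsto (fun t : ℝ => Real.exp (h * δ) * F (t + δ) - F t) atTop
      (𝓝 (Real.exp (h * δ) * (c / h) - c / h)) :=
    (hFshiftp.const_mul _).sub hFlim
  have hSlim : Tendsto (fun t : ℝ => F t - Real.exp (-(h * δ)) * F (t - δ)) atTop
      (𝓝 (c / h - Real.exp (-(h * δ)) * (c / h))) :=
    hFlim.sub (hFshiftm.const_mul _)
  have hRev : ∀ᶠ t : ℝ in atTop,
      Real.exp (h * δ) * F (t + δ) - F t <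
        (Real.exp (h * δ) * (c / h) - c / h) + δ * (ε / 2) :=
    hRlim.eventually_lt_const (by nlinarith [mul_pos hδpos (by linarith : (0:ℝ) < ε/2)])
  have hSev : ∀ᶠ t : ℝ in atTop,
      (c / h - Real.exp (-(h * δ)) * (c / h)) - δ * (ε / 2) <
        F t - Real.exp (-(h * δ)) * F (t - δ) :=
    hSlim.eventually_const_lt (by nlinarith [mul_pos hδpos (by linarith : (0:ℝ) < ε/2)])
  filter_upwards [hRev, hSev, eventually_ge_atTop δ] with t hR hS htδ
  have ht0 : (0:ℝ) ≤ t := le_trans hδpos.le htδ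
  have htδ0 : (0:ℝ) ≤ t - δ := by linarith
  have hexp : (0:ℝ) < Real.exp (-h * t) := Real.exp_pos _
  -- upper bound: δ * (f t * exp(-h t)) ≤ exp(hδ) F(t+δ) - F t
  have hup : δ * (f t * Real.exp (-h * t)) ≤ Real.exp (h * δ) * F (t + δ) - F t := by
    have hadj : B t + (∫ r in t..(t + δ), f r) = B (t + δ) :=
      intervalIntegral.integral_add_adjacent_intervals (hint 0 t le_rfl ht0)
        (hint t (t + δ) ht0 (by linarith))
    have hmono : ∫ r in t..(t + δ), f t ≤ ∫ r in t..(t + δ), f r :=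
      intervalIntegral.integral_mono_on (by linarith) intervalIntegrable_const
        (hint t (t + δ) ht0 (by linarith)) (fun x hx => hf ht0 (le_trans ht0 hx.1) hx.1)
    have hconst : (∫ r in t..(t + δ), f t) = δ * f t := by simp
    have hBineq : δ * f t ≤ B (t + δ) - B t := by
      rw [← hadj]; rw [hconst] at hmono; linarith
    have hexpeq : Real.exp (h * δ) * Real.exp (-h * (t + δ)) = Real.exp (-h * t) := by
      rw [← Real.exp_add]; ring_nf
    have : Real.exp (h * δ) * F (t + δ) - F t = Real.exp (-h * t) * (B (t + δ) - B t) := by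
      simp only [hFdef]
      rw [← mul_assoc, hexpeq]; ring
    rw [this]
    calc δ * (f t * Real.exp (-h * t)) = Real.exp (-h * t) * (δ * f t) := by ring
      _ ≤ Real.exp (-h * t) * (B (t + δ) - B t) :=
        mul_le_mul_of_nonneg_left hBineq hexp.le
  -- lower bound
  have hdown : F t - Real.exp (-(h * δ)) * F (t - δ) ≤ δ * (f t * Real.exp (-h * t)) := by
    have hadj : B (t - δ) + (∫ r in (t - δ)..t, f r) = B t :=
      intervalIntegral.integral_add_adjacent_intervals (hint 0 (t - δ) le_rfl htδ0)
        (hint (t - δ) t htδ0 ht0)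
    have hmono : ∫ r in (t - δ)..t, f r ≤ ∫ r in (t - δ)..t, f t :=
      intervalIntegral.integral_mono_on (by linarith)
        (hint (t - δ) t htδ0 ht0) intervalIntegrable_const
        (fun x hx => hf (le_trans htδ0 hx.1) ht0 hx.2)
    have hconst : (∫ r in (t - δ)..t, f t) = δ * f t := by simp
    have hBineq : B t - B (t - δ) ≤ δ * f t := by
      rw [← hadj]; rw [hconst] at hmono; linarith
    have hexpeq : Real.exp (-(h * δ)) * Real.exp (-h * (t - δ)) = Real.exp (-h * t) := by
      rw [← Real.exp_add]; ring_nf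
    have : F t - Real.exp (-(h * δ)) * F (t - δ) = Real.exp (-h * t) * (B t - B (t - δ)) := by
      simp only [hFdef]
      rw [← mul_assoc, hexpeq]; ring
    rw [this]
    calc Real.exp (-h * t) * (B t - B (t - δ))
        ≤ Real.exp (-h * t) * (δ * f t) := mul_le_mul_of_nonneg_left hBineq hexp.le
      _ = δ * (f t * Real.exp (-h * t)) := by ring
  -- combine
  have key1 : Real.exp (h * δ) * (c / h) - c / h ≤ c * δ * Real.exp (h * δ) := by
    have := exp_ineq1 (h * δ)
    have hch : 0 ≤ c / h := div_nonneg hc hh.le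
    have h2 : (c / h) * (Real.exp (h * δ) - 1) ≤ (c / h) * (h * δ * Real.exp (h * δ)) :=
      mul_le_mul_of_nonneg_left this hch
    have h3 : (c / h) * (h * δ * Real.exp (h * δ)) = c * δ * Real.exp (h * δ) := by
      field_simp
    nlinarith
  have key2 : c * δ * Real.exp (-(h * δ)) ≤ c / h - Real.exp (-(h * δ)) * (c / h) := by
    have := exp_ineq2 (h * δ)
    have hch : 0 ≤ c / h := div_nonneg hc hh.le
    have h2 : (c / h) * (h * δ * Real.exp (-(h * δ))) ≤ (c / h) * (1 - Real.exp (-(h * δ))) :=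
      mul_le_mul_of_nonneg_left this hch
    have h3 : (c / h) * (h * δ * Real.exp (-(h * δ))) = c * δ * Real.exp (-(h * δ)) := by
      field_simp
    nlinarith
  have hub : f t * Real.exp (-h * t) < c + ε := by
    have h1 : δ * (f t * Real.exp (-h * t)) < c * δ * Real.exp (h * δ) + δ * (ε / 2) := by
      calc δ * (f t * Real.exp (-h * t)) ≤ Real.exp (h * δ) * F (t + δ) - F t := hup
        _ < (Real.exp (h * δ) * (c / h) - c / h) + δ * (ε / 2) := hR
        _ ≤ c * δ * Real.exp (h * δ) + δ * (ε / 2) := by linarith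
    have hδne : δ ≠ 0 := hδpos.ne'
    have h2 : f t * Real.exp (-h * t) < c * Real.exp (h * δ) + ε / 2 := by
      have hdiv := (div_lt_div_iff_of_pos_right hδpos).mpr h1
      have e1 : δ * (f t * Real.exp (-h * t)) / δ = f t * Real.exp (-h * t) := by
        field_simp
      have e2 : (c * δ * Real.exp (h * δ) + δ * (ε / 2)) / δ
          = c * Real.exp (h * δ) + ε / 2 := by
        field_simp
      rwa [e1, e2] at hdiv
    have h3 : c * Real.exp (h * δ) = c + c * (Real.exp (h * δ) - 1) := by ring
    linarith
  have hlb : c - ε < f t * Real.exp (-h * t) := by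
    have h1 : c * δ * Real.exp (-(h * δ)) - δ * (ε / 2) < δ * (f t * Real.exp (-h * t)) := by
      calc c * δ * Real.exp (-(h * δ)) - δ * (ε / 2)
          ≤ (c / h - Real.exp (-(h * δ)) * (c / h)) - δ * (ε / 2) := by linarith
        _ < F t - Real.exp (-(h * δ)) * F (t - δ) := hS
        _ ≤ δ * (f t * Real.exp (-h * t)) := hdown
    have hδne : δ ≠ 0 := hδpos.ne'
    have h2 : c * Real.exp (-(h * δ)) - ε / 2 < f t * Real.exp (-h * t) := by
      have hdiv := (div_lt_div_iff_of_pos_right hδpos).mpr h1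
      have e1 : (c * δ * Real.exp (-(h * δ)) - δ * (ε / 2)) / δ
          = c * Real.exp (-(h * δ)) - ε / 2 := by field_simp
      have e2 : δ * (f t * Real.exp (-h * t)) / δ = f t * Real.exp (-h * t) := by
        field_simp
      rwa [e1, e2] at hdiv
    have h3 : c * (1 - Real.exp (-(h * δ))) ≤ c * (Real.exp (h * δ) - 1) :=
      mul_le_mul_of_nonneg_left (exp_ineq3 (h * δ)) hc
    nlinarith
  rw [Real.dist_eq, abs_sub_lt_iff]
  constructor <;> linarith
end
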